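/- (Greedy curvature performance bound.) Let f be a monotone submodular set function on a finite ground set E with f(∅) = 0 and f({e}) > 0 for every e ∈ E, let N ≥ 1, let s_1,…,s_N be a greedy sequence with intermediate sets S^0 = ∅ ⊆ S^1 ⊆ … ⊆ S^N = S^G, and let S* be any subset of E with |S*| ≤ N. Let α_G = max_{0 ≤ i ≤ N−1} max_{e ∈ E∖S^i} (1 − Δf(e | S^i) / Δf(e|∅)) be the greedy curvature. Then f(S^G) ≥ (1 − α_G·(1 − 1/N)) · f(S*). -/

import Mathlib

open scoped Classical

private lemma aux_card_filter_lt (n k : ℕ) (hk : k ≤ n) :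
    (Finset.univ.filter (fun i : Fin n => (i:ℕ) < k)).card = k := by
  have h : (Finset.univ.filter (fun i : Fin n => (i:ℕ) < k)).card = (Finset.range k).card := by
    apply Finset.card_bij' (fun (i : Fin n) _ => (i : ℕ))
      (fun a ha => (⟨a, lt_of_lt_of_le (Finset.mem_range.mp ha) hk⟩ : Fin n))
    case hi => intro a ha; simpa using (Finset.mem_filter.mp ha).2
    case hj => intro a ha; simp; exact Finset.mem_range.mp ha
    case left_inv => intro a ha; simp
    case right_inv => intro a ha; simp
  rw [h, Finset.card_range]

/-- Greedy-curvature performance bound: `f(S^G) ≥ (1 − α_G(1 − 1/N)) · f(S*)`. -/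
theorem greedy_greedy_curvature_bound
    {E : Type*} [Fintype E] [DecidableEq E]
    (N : ℕ) (hN : 1 ≤ N) (hcard : N ≤ Fintype.card E)
    (f : Finset E → ℝ)
    (hf0 : f ∅ = 0)
    (hfpos : ∀ e : E, 0 < f {e})
    (hmono : ∀ A B : Finset E, A ⊆ B → f A ≤ f B)
    (hsub : ∀ A B : Finset E, A ⊆ B → ∀ e ∉ B,
      f (insert e B) - f B ≤ f (insert e A) - f A)
    (s : Fin N → E) (hs : Function.Injective s)
    (S : ℕ → Finset E)
    (hS : ∀ k : ℕ, S k = (Finset.univ.filter (fun j : Fin N => (j : ℕ) < k)).image s)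
    (hgreedy : ∀ k : Fin N, ∀ e : E, e ∉ S k →
      f (insert e (S k)) - f (S k) ≤ f (insert (s k) (S k)) - f (S k))
    (Sstar : Finset E) (hstar : Sstar.card ≤ N)
    (αG : ℝ)
    (hαG : IsGreatest {v : ℝ | ∃ i : Fin N, ∃ e : E, e ∉ S i ∧
      v = 1 - (f (insert e (S i)) - f (S i)) / f {e}} αG) :
    (1 - αG * (1 - 1 / (N : ℝ))) * f Sstar ≤ f (S N) := by
  have hN0 : (0:ℝ) < N := by exact_mod_cast hN
  -- basic facts about S
  have hS0 : S 0 = ∅ := by rw [hS]; simp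
  have hScard : ∀ k, k ≤ N → (S k).card = k := by
    intro k hk
    rw [hS, Finset.card_image_of_injective _ hs, aux_card_filter_lt N k hk]
  have hSsucc : ∀ (k : ℕ) (hk : k < N), S (k+1) = insert (s ⟨k, hk⟩) (S k) := by
    intro k hk
    rw [hS, hS]
    have h1 : Finset.univ.filter (fun j : Fin N => (j:ℕ) < k+1)
        = insert (⟨k, hk⟩ : Fin N) (Finset.univ.filter (fun j : Fin N => (j:ℕ) < k)) := by
      ext j
      simp [Fin.ext_iff]
      omega
    rw [h1, Finset.image_insert]
  have hSnotmem : ∀ (k : ℕ) (hk : k < N), s ⟨k, hk⟩ ∉ S k := by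
    intro k hk hmem
    rw [hS] at hmem
    obtain ⟨j, hj, hje⟩ := Finset.mem_image.mp hmem
    have hjk := hs hje
    have : (j : ℕ) < k := by simpa using hj
    rw [hjk] at this
    simp at this
  have hSmono : ∀ a b : ℕ, a ≤ b → S a ⊆ S b := by
    intro a b hab
    rw [hS a, hS b]
    intro x hx
    obtain ⟨j, hj, rfl⟩ := Finset.mem_image.mp hx
    refine Finset.mem_image.mpr ⟨j, ?_, rfl⟩
    simp only [Finset.mem_filter, Finset.mem_univ, true_and] at hj ⊢
    omega
  have hstep_nonneg : ∀ k : ℕ, 0 ≤ f (S (k+1)) - f (S k) := by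
    intro k
    have := hmono (S k) (S (k+1)) (hSmono k (k+1) (Nat.le_succ k))
    linarith
  have hSstar_nonneg : 0 ≤ f Sstar := by
    have := hmono ∅ Sstar (Finset.empty_subset _)
    linarith
  -- α bounds
  have hα1 : αG ≤ 1 := by
    obtain ⟨i, e, he, hv⟩ := hαG.1
    have h1 : f (S i) ≤ f (insert e (S i)) :=
      hmono _ _ (Finset.subset_insert _ _)
    have h2 : 0 ≤ (f (insert e (S i)) - f (S i)) / f {e} :=
      div_nonneg (by linarith) (le_of_lt (hfpos e))
    rw [hv]; linarith
  have hα0 : 0 ≤ αG := by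
    have hEne : Nonempty E := by
      have : 0 < Fintype.card E := lt_of_lt_of_le hN hcard
      exact Fintype.card_pos_iff.mp this
    obtain ⟨e0⟩ := hEne
    have hmem : (0:ℝ) ∈ {v : ℝ | ∃ i : Fin N, ∃ e : E, e ∉ S i ∧
        v = 1 - (f (insert e (S i)) - f (S i)) / f {e}} := by
      refine ⟨⟨0, hN⟩, e0, ?_, ?_⟩
      · show e0 ∉ S 0
        rw [hS0]; simp
      · show (0:ℝ) = 1 - (f (insert e0 (S 0)) - f (S 0)) / f {e0}
        rw [hS0, hf0, show insert e0 (∅ : Finset E) = {e0} from rfl, sub_zero,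
          div_self (ne_of_gt (hfpos e0))]
        ring
    exact hαG.2 hmem
  -- trivial case : Sstar = ∅
  rcases Nat.eq_zero_or_pos Sstar.card with h0 | hm1
  · have : Sstar = ∅ := Finset.card_eq_zero.mp h0
    rw [this, hf0, mul_zero]
    have := hmono ∅ (S N) (Finset.empty_subset _)
    linarith
  -- main case
  set m := Sstar.card with hmdef
  have hmN : m ≤ N := hstar
  -- enumerate Sstar in decreasing order of singleton values
  set g : Fin m → E := fun j => (Sstar.equivFin.symm j : E) with hg
  have hg_inj : Function.Injective g := by
    intro a b hab
    exact Sstar.equivFin.symm.injective (Subtype.ext hab)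
  have hg_mem : ∀ j, g j ∈ Sstar := fun j => (Sstar.equivFin.symm j).2
  set val : Fin m → ℝ := fun j => f {g j} with hval
  set σ : Equiv.Perm (Fin m) := Tuple.sort val with hσ
  set e' : Fin m → E := fun j => g (σ (j.rev)) with he'
  have he'_mem : ∀ j, e' j ∈ Sstar := fun j => hg_mem _
  have he'_inj : Function.Injective e' := by
    intro a b hab
    have := hg_inj hab
    have := σ.injective this
    exact Fin.rev_injective this
  have he'_anti : ∀ j1 j2 : Fin m, j1 ≤ j2 → f {e' j2} ≤ f {e' j1} := by
    intro j1 j2 h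
    have hrev : j2.rev ≤ j1.rev := by
      rw [Fin.rev_le_rev]; exact h
    exact Tuple.monotone_sort val hrev
  set T : ℝ := ∑ j : Fin m, f {e' j} with hT
  have hT_eq : T = ∑ x ∈ Sstar, f {x} := by
    rw [hT]
    have h1 : ∑ j : Fin m, f {e' j} = ∑ j : Fin m, val ((Fin.revPerm.trans σ) j) := rfl
    rw [h1, Equiv.sum_comp (Fin.revPerm.trans σ) val]
    rw [show (∑ j : Fin m, val j) = ∑ j : Fin m, f {(Sstar.equivFin.symm j : E)} from rfl]
    rw [Fintype.sum_equiv Sstar.equivFin.symm _ (fun x : Sstar => f {(x : E)}) (fun j => rfl)]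
    exact Finset.sum_coe_sort Sstar (fun x => f {x})
  have hsub_singletons : ∀ A : Finset E, f A ≤ ∑ x ∈ A, f {x} := by
    intro A
    induction A using Finset.induction_on with
    | empty => rw [hf0, Finset.sum_empty]
    | insert _ _ hx ih =>
      rename_i x A'
      rw [Finset.sum_insert hx]
      have h1 := hsub ∅ A' (Finset.empty_subset _) x hx
      rw [hf0, show insert x (∅ : Finset E) = {x} from rfl, sub_zero] at h1
      linarith
  have hfT : f Sstar ≤ T := by rw [hT_eq]; exact hsub_singletons Sstar
  -- the distinguished first element
  set z : Fin m := ⟨0, hm1⟩ with hz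
  have hz_le : ∀ j : Fin m, z ≤ j := fun j => by
    simp [hz, Fin.le_def]
  -- pigeonhole: for each j, some e' i with i ≤ j avoids S j
  have pigeon : ∀ j : Fin m, ∃ i : Fin m, i ≤ j ∧ e' i ∉ S (j : ℕ) := by
    intro j
    by_contra hcon
    push_neg at hcon
    have hsubset : (Finset.univ.filter (fun i : Fin m => (i:ℕ) < (j:ℕ)+1)).image e' ⊆ S (j:ℕ) := by
      intro x hx
      obtain ⟨i, hi, rfl⟩ := Finset.mem_image.mp hx
      have : (i:ℕ) < (j:ℕ)+1 := by simpa using hi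
      exact hcon i (by rw [Fin.le_def]; omega)
    have hc1 : ((Finset.univ.filter (fun i : Fin m => (i:ℕ) < (j:ℕ)+1)).image e').card = (j:ℕ)+1 := by
      rw [Finset.card_image_of_injective _ he'_inj, aux_card_filter_lt m ((j:ℕ)+1) j.isLt]
    have hc2 : (S (j:ℕ)).card = (j:ℕ) := hScard _ (le_trans (le_of_lt j.isLt) hmN)
    have := Finset.card_le_card hsubset
    omega
  -- per-step lower bounds
  set w : Fin m → ℝ := fun j => if j = z then f {e' j} else (1 - αG) * f {e' j} with hw
  have key : ∀ j : Fin m, w j ≤ f (S ((j:ℕ)+1)) - f (S (j:ℕ)) := by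
    intro j
    have hjN : (j:ℕ) < N := lt_of_lt_of_le j.isLt hmN
    have hgr : ∀ e : E, e ∉ S (j:ℕ) →
        f (insert e (S (j:ℕ))) - f (S (j:ℕ))
          ≤ f (insert (s ⟨(j:ℕ), hjN⟩) (S (j:ℕ))) - f (S (j:ℕ)) :=
      fun e he => hgreedy ⟨(j:ℕ), hjN⟩ e he
    rw [hSsucc (j:ℕ) hjN]
    rcases eq_or_ne j z with hjz | hjz
    · -- first step
      have hz0 : ((j:ℕ)) = 0 := by rw [hjz]
      have hnot : e' j ∉ S (j:ℕ) := by rw [hz0, hS0]; simp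
      have h1 := hgr (e' j) hnot
      have h2 : f (insert (e' j) (S (j:ℕ))) - f (S (j:ℕ)) = f {e' j} := by
        rw [hz0, hS0, hf0, show insert (e' j) (∅ : Finset E) = {e' j} from rfl, sub_zero]
      rw [hw]
      simp only [if_pos hjz]
      linarith
    · obtain ⟨i, hij, hnot⟩ := pigeon j
      have h1 := hgr (e' i) hnot
      have h2 : 1 - (f (insert (e' i) (S (j:ℕ))) - f (S (j:ℕ))) / f {e' i} ≤ αG :=
        hαG.2 ⟨⟨(j:ℕ), hjN⟩, e' i, hnot, rfl⟩
      have hpos := hfpos (e' i)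
      have h3 : (1 - αG) * f {e' i} ≤ f (insert (e' i) (S (j:ℕ))) - f (S (j:ℕ)) := by
        rw [← sub_nonneg]
        have h4 : 1 - αG ≤ (f (insert (e' i) (S (j:ℕ))) - f (S (j:ℕ))) / f {e' i} := by linarith
        calc (0:ℝ) ≤ ((f (insert (e' i) (S (j:ℕ))) - f (S (j:ℕ))) / f {e' i} - (1 - αG)) * f {e' i} := by
              apply mul_nonneg (by linarith) (le_of_lt hpos)
          _ = f (insert (e' i) (S (j:ℕ))) - f (S (j:ℕ)) - (1 - αG) * f {e' i} := by
              field_simp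
      have h5 : (1 - αG) * f {e' j} ≤ (1 - αG) * f {e' i} :=
        mul_le_mul_of_nonneg_left (he'_anti i j hij) (by linarith)
      rw [hw]
      simp only [if_neg hjz]
      linarith
  -- assemble the sum
  have hsum1 : f (S N) = ∑ k ∈ Finset.range N, (f (S (k+1)) - f (S k)) := by
    rw [Finset.sum_range_sub (fun k => f (S k)) N, hS0, hf0, sub_zero]
  have hsum2 : ∑ k ∈ Finset.range m, (f (S (k+1)) - f (S k))
      ≤ ∑ k ∈ Finset.range N, (f (S (k+1)) - f (S k)) := by
    apply Finset.sum_le_sum_of_subset_of_nonneg (Finset.range_subset_range.mpr hmN)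
    intro k _ _
    exact hstep_nonneg k
  have hsum3 : ∑ j : Fin m, w j ≤ ∑ k ∈ Finset.range m, (f (S (k+1)) - f (S k)) := by
    rw [← Fin.sum_univ_eq_sum_range (fun k => f (S (k+1)) - f (S k)) m]
    exact Finset.sum_le_sum (fun j _ => key j)
  have hsum4 : ∑ j : Fin m, w j = (1 - αG) * T + αG * f {e' z} := by
    have : ∀ j : Fin m, w j = (1 - αG) * f {e' j} + (if j = z then αG * f {e' z} else 0) := by
      intro j
      rw [hw]
      rcases eq_or_ne j z with rfl | hjz
      · simp; ring
      · simp [hjz]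
    rw [Finset.sum_congr rfl (fun j _ => this j), Finset.sum_add_distrib]
    rw [Finset.sum_ite_eq' Finset.univ z (fun _ => αG * f {e' z}), if_pos (Finset.mem_univ z)]
    rw [hT, Finset.mul_sum]
  -- f {e' z} ≥ f Sstar / N
  have hv0 : f Sstar / N ≤ f {e' z} := by
    have hTm : T ≤ (m:ℝ) * f {e' z} := by
      rw [hT]
      calc ∑ j : Fin m, f {e' j} ≤ ∑ _j : Fin m, f {e' z} :=
            Finset.sum_le_sum (fun j _ => he'_anti z j (hz_le j))
        _ = (m:ℝ) * f {e' z} := by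
            rw [Finset.sum_const, Finset.card_univ, Fintype.card_fin, nsmul_eq_mul]
    have hmNr : (m:ℝ) ≤ (N:ℝ) := by exact_mod_cast hmN
    have hez : 0 < f {e' z} := hfpos _
    rw [div_le_iff₀ hN0]
    calc f Sstar ≤ T := hfT
      _ ≤ (m:ℝ) * f {e' z} := hTm
      _ ≤ (N:ℝ) * f {e' z} := mul_le_mul_of_nonneg_right hmNr (le_of_lt hez)
      _ = f {e' z} * N := mul_comm _ _
  -- final chain
  have hfinal : (1 - αG * (1 - 1 / (N : ℝ))) * f Sstar
      = (1 - αG) * f Sstar + αG * (f Sstar / N) := by ring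
  rw [hfinal]
  have h6 : (1 - αG) * f Sstar ≤ (1 - αG) * T :=
    mul_le_mul_of_nonneg_left hfT (by linarith)
  have h7 : αG * (f Sstar / N) ≤ αG * f {e' z} :=
    mul_le_mul_of_nonneg_left hv0 hα0
  calc (1 - αG) * f Sstar + αG * (f Sstar / N)
      ≤ (1 - αG) * T + αG * f {e' z} := by linarith
    _ = ∑ j : Fin m, w j := hsum4.symm
    _ ≤ ∑ k ∈ Finset.range m, (f (S (k+1)) - f (S k)) := hsum3
    _ ≤ ∑ k ∈ Finset.range N, (f (S (k+1)) - f (S k)) := hsum2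
    _ = f (S N) := hsum1.symm
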